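/- Suppose ||D̂ - D̄||_F < λ_r(-JD̄J), where λ_r denotes the r-th largest eigenvalue and r = rank(-JD̄J), with -JD̄J positive semidefinite and -JD̂J positive semidefinite. Then rank(-JD̂J) ≥ rank(-JD̄J). -/

import Mathlib

open Matrix

/-- The centering matrix `J = I - (1/n) 𝟙𝟙ᵀ`. -/
noncomputable def centerJ (n : ℕ) : Matrix (Fin n) (Fin n) ℝ :=
  1 - ((n : ℝ))⁻¹ • Matrix.of (fun _ _ => (1 : ℝ))

/-- The Frobenius norm of a real square matrix. -/
noncomputable def frobNorm {n : ℕ} (A : Matrix (Fin n) (Fin n) ℝ) : ℝ :=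
  Real.sqrt (∑ i, ∑ j, (A i j) ^ 2)

/-- The `r`-th largest eigenvalue (`r = 1` being the largest) of a Hermitian matrix. -/
noncomputable def rthLargestEigenvalue {n : ℕ} {A : Matrix (Fin n) (Fin n) ℝ}
    (hA : A.IsHermitian) (r : ℕ) : ℝ :=
  (((List.finRange n).map hA.eigenvalues).mergeSort (fun a b => b ≤ a)).getD (r - 1) 0

section Aux

lemma centerJ_symm (n : ℕ) : (centerJ n)ᵀ = centerJ n := by
  ext i j
  simp [centerJ, Matrix.one_apply, eq_comm]

lemma centerJ_idem (n : ℕ) (hn : 1 ≤ n) : centerJ n * centerJ n = centerJ n := by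
  have hn' : (n : ℝ) ≠ 0 := Nat.cast_ne_zero.2 (by omega)
  ext i j
  simp only [centerJ, Matrix.mul_apply, Matrix.sub_apply, Matrix.smul_apply,
    Matrix.one_apply, Matrix.of_apply, smul_eq_mul, mul_one]
  rw [Finset.sum_congr rfl (fun k _ => by ring :
    ∀ k ∈ Finset.univ, ((if i = k then (1:ℝ) else 0) - (n:ℝ)⁻¹) * ((if k = j then (1:ℝ) else 0) - (n:ℝ)⁻¹)
      = (if i = k then (1:ℝ) else 0) * (if k = j then (1:ℝ) else 0)
        - (n:ℝ)⁻¹ * (if i = k then (1:ℝ) else 0) - (n:ℝ)⁻¹ * (if k = j then (1:ℝ) else 0) + (n:ℝ)⁻¹ * (n:ℝ)⁻¹)]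
  rw [Finset.sum_add_distrib, Finset.sum_sub_distrib, Finset.sum_sub_distrib]
  rw [Finset.sum_const, Finset.card_univ, Fintype.card_fin]
  have h1 : ∑ k : Fin n, (if i = k then (1:ℝ) else 0) * (if k = j then (1:ℝ) else 0)
      = if i = j then 1 else 0 := by
    rw [Finset.sum_eq_single i] <;> simp +contextual [eq_comm]
  have h2 : ∑ k : Fin n, (n:ℝ)⁻¹ * (if i = k then (1:ℝ) else 0) = (n:ℝ)⁻¹ := by
    simp
  have h3 : ∑ k : Fin n, (n:ℝ)⁻¹ * (if k = j then (1:ℝ) else 0) = (n:ℝ)⁻¹ := by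
    simp
  rw [h1, h2, h3]
  have h4 : (n • ((n:ℝ)⁻¹ * (n:ℝ)⁻¹) : ℝ) = (n:ℝ)⁻¹ := by
    rw [nsmul_eq_mul]; field_simp
  rw [h4]; ring

lemma frobNorm_nonneg' {n : ℕ} (A : Matrix (Fin n) (Fin n) ℝ) : 0 ≤ frobNorm A :=
  Real.sqrt_nonneg _

lemma dot_self_nonneg' {n : ℕ} (y : Fin n → ℝ) : 0 ≤ y ⬝ᵥ y :=
  Finset.sum_nonneg fun i _ => mul_self_nonneg (y i)

lemma quad_abs_le {n : ℕ} (M : Matrix (Fin n) (Fin n) ℝ) (y : Fin n → ℝ) :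
    |y ⬝ᵥ (M *ᵥ y)| ≤ frobNorm M * (y ⬝ᵥ y) := by
  have hq : y ⬝ᵥ (M *ᵥ y) = ∑ p : Fin n × Fin n, M p.1 p.2 * (y p.1 * y p.2) := by
    rw [Fintype.sum_prod_type]
    simp only [dotProduct, mulVec, dotProduct, Finset.mul_sum]
    exact Finset.sum_congr rfl fun i _ => Finset.sum_congr rfl fun j _ => by ring
  have hcs := Finset.sum_mul_sq_le_sq_mul_sq Finset.univ
    (fun p : Fin n × Fin n => M p.1 p.2) (fun p : Fin n × Fin n => y p.1 * y p.2)
  have hg : ∑ p : Fin n × Fin n, (y p.1 * y p.2) ^ 2 = (y ⬝ᵥ y) ^ 2 := by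
    rw [Fintype.sum_prod_type]
    simp only [dotProduct, mul_pow, sq]
    rw [Finset.sum_mul_sum]
    exact Finset.sum_congr rfl fun i _ => Finset.sum_congr rfl fun j _ => by ring
  have hf : ∑ p : Fin n × Fin n, (M p.1 p.2) ^ 2 = ∑ i, ∑ j, (M i j) ^ 2 := by
    rw [Fintype.sum_prod_type]
  have habs : |y ⬝ᵥ (M *ᵥ y)| = Real.sqrt ((y ⬝ᵥ (M *ᵥ y)) ^ 2) :=
    (Real.sqrt_sq_eq_abs _).symm
  rw [habs, hq]
  calc Real.sqrt ((∑ p : Fin n × Fin n, M p.1 p.2 * (y p.1 * y p.2)) ^ 2)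
      ≤ Real.sqrt ((∑ p : Fin n × Fin n, (M p.1 p.2) ^ 2) *
          (∑ p : Fin n × Fin n, (y p.1 * y p.2) ^ 2)) := Real.sqrt_le_sqrt hcs
    _ = frobNorm M * (y ⬝ᵥ y) := by
        rw [Real.sqrt_mul (by positivity), hg, hf, Real.sqrt_sq (dot_self_nonneg' y)]
        rfl

lemma dot_sym_mulVec {n : ℕ} {P : Matrix (Fin n) (Fin n) ℝ} (hsym : Pᵀ = P)
    (x w : Fin n → ℝ) : x ⬝ᵥ (P *ᵥ w) = (P *ᵥ x) ⬝ᵥ w := by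
  rw [Matrix.dotProduct_mulVec]
  have h := Matrix.vecMul_transpose P x
  rw [hsym] at h
  rw [h]

lemma proj_quad {n : ℕ} {P : Matrix (Fin n) (Fin n) ℝ} (hsym : Pᵀ = P)
    (hid : P * P = P) (x : Fin n → ℝ) :
    (P *ᵥ x) ⬝ᵥ (P *ᵥ x) = x ⬝ᵥ (P *ᵥ x) := by
  rw [← dot_sym_mulVec hsym, Matrix.mulVec_mulVec, hid]

lemma proj_le {n : ℕ} {P : Matrix (Fin n) (Fin n) ℝ} (hsym : Pᵀ = P)
    (hid : P * P = P) (x : Fin n → ℝ) :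
    (P *ᵥ x) ⬝ᵥ (P *ᵥ x) ≤ x ⬝ᵥ x := by
  have hQsym : (1 - P)ᵀ = 1 - P := by rw [Matrix.transpose_sub, Matrix.transpose_one, hsym]
  have hQid : (1 - P) * (1 - P) = 1 - P := by
    rw [Matrix.sub_mul, Matrix.mul_sub, Matrix.mul_sub, hid]
    simp
  have h := dot_self_nonneg' ((1 - P) *ᵥ x)
  rw [proj_quad hQsym hQid x] at h
  rw [Matrix.sub_mulVec, Matrix.one_mulVec, dotProduct_sub] at h
  rw [proj_quad hsym hid x]
  linarith

lemma eig_dot {n : ℕ} {A : Matrix (Fin n) (Fin n) ℝ} (hA : A.IsHermitian) (i j : Fin n) :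
    (hA.eigenvectorBasis i : Fin n → ℝ) ⬝ᵥ (hA.eigenvectorBasis j : Fin n → ℝ)
      = if i = j then 1 else 0 := by
  have h := orthonormal_iff_ite.mp hA.eigenvectorBasis.orthonormal i j
  rw [PiLp.inner_apply] at h
  simp only [RCLike.inner_apply, starRingEnd_apply, star_trivial] at h
  rw [← h]; simp only [dotProduct]; exact Finset.sum_congr rfl fun _ _ => mul_comm _ _

lemma sum_dot {n : ℕ} {ι : Type*} [Fintype ι] (f : ι → (Fin n → ℝ)) (g : Fin n → ℝ) :
    (∑ i, f i) ⬝ᵥ g = ∑ i, f i ⬝ᵥ g := by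
  simp only [dotProduct, Finset.sum_apply, Finset.sum_mul]
  rw [Finset.sum_comm]

lemma dot_sum {n : ℕ} {ι : Type*} [Fintype ι] (g : Fin n → ℝ) (f : ι → (Fin n → ℝ)) :
    g ⬝ᵥ (∑ i, f i) = ∑ i, g ⬝ᵥ f i := by
  simp only [dotProduct, Finset.sum_apply, Finset.mul_sum]
  rw [Finset.sum_comm]

lemma mulVec_eigvec {n : ℕ} {A : Matrix (Fin n) (Fin n) ℝ} (hA : A.IsHermitian) (i : Fin n) :
    A *ᵥ (hA.eigenvectorBasis i : Fin n → ℝ)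
      = hA.eigenvalues i • (hA.eigenvectorBasis i : Fin n → ℝ) :=
  hA.mulVec_eigenvectorBasis i

lemma dot_sum_ortho {n : ℕ} {ι : Type*} [Fintype ι] [DecidableEq ι] (v : ι → (Fin n → ℝ))
    (hdot : ∀ i j, v i ⬝ᵥ v j = if i = j then 1 else 0) (a b : ι → ℝ) :
    (∑ i, a i • v i) ⬝ᵥ (∑ j, b j • v j) = ∑ i, a i * b i := by
  rw [sum_dot]
  refine Finset.sum_congr rfl fun i _ => ?_
  rw [dot_sum]
  rw [Finset.sum_eq_single i]
  · rw [smul_dotProduct, dotProduct_smul, hdot i i, if_pos rfl,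
      smul_eq_mul, smul_eq_mul, mul_one]
  · intro j _ hj
    rw [smul_dotProduct, dotProduct_smul, hdot i j, if_neg (fun h => hj h.symm)]
    simp
  · intro h; exact absurd (Finset.mem_univ i) h

lemma count_ge {n r : ℕ} (eig : Fin n → ℝ) (hrn : r ≤ n) (hr1 : 1 ≤ r) :
    r ≤ (Finset.univ.filter (fun i =>
      (((List.finRange n).map eig).mergeSort (fun a b => b ≤ a)).getD (r-1) 0 ≤ eig i)).card := by
  set le : ℝ → ℝ → Bool := fun a b => decide (b ≤ a) with hle
  set L : List ℝ := ((List.finRange n).map eig).mergeSort le with hL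
  set lam : ℝ := L.getD (r-1) 0 with hlam
  have hlen : L.length = n := by
    rw [hL, List.length_mergeSort, List.length_map, List.length_finRange]
  have hidx : r - 1 < L.length := by omega
  have hlam' : lam = L[r-1] := List.getD_eq_getElem L 0 hidx
  have hsorted : L.Pairwise (fun a b => le a b) :=
    List.pairwise_mergeSort (le := le)
      (fun a b c h1 h2 => by simp only [hle, decide_eq_true_eq] at *; linarith)
      (fun a b => by simp only [hle, Bool.or_eq_true, decide_eq_true_eq]; exact le_total b a)
      _
  have key : ∀ k, (hk : k < r) → lam ≤ L[k]'(by omega) := by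
    intro k hk
    rcases eq_or_lt_of_le (Nat.le_sub_one_of_lt hk) with h | h
    · rw [hlam']; subst h; exact le_refl _
    · have := (List.pairwise_iff_getElem.mp hsorted) k (r-1) (by omega) hidx h
      rw [hlam']
      simpa [hle] using this
  have htake : ∀ a ∈ L.take r, (fun a => decide (lam ≤ a)) a = true := by
    intro a ha
    rw [List.mem_take_iff_getElem] at ha
    obtain ⟨k, hk, rfl⟩ := ha
    have hkr : k < r := by omega
    simpa using key k hkr
  have h1 : (L.take r).countP (fun a => decide (lam ≤ a)) = r := by
    rw [List.countP_eq_length.2 htake, List.length_take, hlen]; omega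
  have h2 : r ≤ L.countP (fun a => decide (lam ≤ a)) := by
    rw [← h1]; exact (List.take_sublist r L).countP_le (p := fun a => decide (lam ≤ a))
  have h3 : L.countP (fun a => decide (lam ≤ a))
      = ((List.finRange n).map eig).countP (fun a => decide (lam ≤ a)) :=
    (List.mergeSort_perm _ le).countP_eq _
  have h4 : ((List.finRange n).map eig).countP (fun a => decide (lam ≤ a))
      = (List.finRange n).countP (fun i => decide (lam ≤ eig i)) := by
    rw [List.countP_map]; rfl
  have h5 : (Finset.univ.filter (fun i => lam ≤ eig i)).card
      = (List.finRange n).countP (fun i => decide (lam ≤ eig i)) := by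
    rw [Fin.univ_def]
    simp only [Finset.filter, Finset.card_mk, Multiset.filter_coe, Multiset.coe_card,
      List.countP_eq_length_filter]
  rw [h5, ← h4, ← h3]
  exact h2

end Aux

/-- If `‖D̂ - D̄‖_F < λ_r(-JD̄J)` with `r = rank(-JD̄J)` and both doubly-centered
matrices positive semidefinite, then `rank(-JD̂J) ≥ rank(-JD̄J)`. -/
theorem rank_lower_bound (n : ℕ) (hn : 1 ≤ n)
    (Dhat Dbar : Matrix (Fin n) (Fin n) ℝ)
    (hbar : (-(centerJ n * Dbar * centerJ n)).PosSemidef)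
    (hhat : (-(centerJ n * Dhat * centerJ n)).PosSemidef)
    (r : ℕ) (hr : r = (-(centerJ n * Dbar * centerJ n)).rank) (hr1 : 1 ≤ r)
    (hclose : frobNorm (Dhat - Dbar) < rthLargestEigenvalue hbar.1 r) :
    (-(centerJ n * Dhat * centerJ n)).rank ≥ (-(centerJ n * Dbar * centerJ n)).rank := by
  classical
  set A : Matrix (Fin n) (Fin n) ℝ := -(centerJ n * Dbar * centerJ n) with hAdef
  set B : Matrix (Fin n) (Fin n) ℝ := -(centerJ n * Dhat * centerJ n) with hBdef
  set lam : ℝ := rthLargestEigenvalue hbar.1 r with hlamdef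
  set eig : Fin n → ℝ := hbar.1.eigenvalues with heig
  set v : Fin n → (Fin n → ℝ) := fun i => (hbar.1.eigenvectorBasis i : Fin n → ℝ) with hv
  have hrn : r ≤ n := by
    rw [hr]
    simpa using A.rank_le_card_width
  -- the set of eigenvalue indices with eigenvalue at least `lam`
  set T : Finset (Fin n) := Finset.univ.filter (fun i => lam ≤ eig i) with hT
  have hTcard : r ≤ T.card := count_ge eig hrn hr1
  have hmemT : ∀ i ∈ T, lam ≤ eig i := fun i hi => (Finset.mem_filter.mp hi).2
  -- orthonormality in dot-product form
  have hdot : ∀ i j : T, v i ⬝ᵥ v j = if i = j then 1 else 0 := by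
    intro i j
    rw [hv, eig_dot hbar.1]
    exact if_congr Subtype.coe_inj rfl rfl
  -- linear independence of the selected eigenvectors
  have hli : LinearIndependent ℝ (fun i : T => v i) := by
    rw [Fintype.linearIndependent_iff]
    intro c hc j
    have h := congrArg (fun w => w ⬝ᵥ v j) hc
    rw [sum_dot] at h
    simp only [smul_dotProduct, smul_eq_mul] at h
    rw [Finset.sum_congr rfl (fun i _ => by rw [hdot i j])] at h
    simpa [Finset.sum_ite_eq', mul_ite] using h
  set V : Submodule ℝ (Fin n → ℝ) := Submodule.span ℝ (Set.range (fun i : T => v i)) with hV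
  have hVfr : Module.finrank ℝ V = T.card := by
    rw [hV, finrank_span_eq_card hli, Fintype.card_coe]
  -- quadratic form lower bound on V
  have hquadA : ∀ x ∈ V, lam * (x ⬝ᵥ x) ≤ x ⬝ᵥ (A *ᵥ x) := by
    intro x hx
    rw [hV, Submodule.mem_span_range_iff_exists_fun] at hx
    obtain ⟨c, rfl⟩ := hx
    have hmul : A *ᵥ (∑ i : T, c i • v i) = ∑ i : T, (c i * eig i) • v i := by
      have := map_sum A.mulVecLin (fun i : T => c i • v i) Finset.univ
      simp only [Matrix.mulVecLin_apply] at this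
      rw [this]
      refine Finset.sum_congr rfl fun i _ => ?_
      rw [Matrix.mulVec_smul, hv, heig, mulVec_eigvec hbar.1]
      rw [smul_smul]
    have hxAx : (∑ i : T, c i • v i) ⬝ᵥ (A *ᵥ (∑ i : T, c i • v i))
        = ∑ i : T, eig i * (c i)^2 := by
      rw [hmul, dot_sum_ortho (fun i : T => v i) hdot c (fun i : T => c i * eig i)]
      exact Finset.sum_congr rfl fun i _ => by ring
    have hxx : (∑ i : T, c i • v i) ⬝ᵥ (∑ i : T, c i • v i) = ∑ i : T, (c i)^2 := by
      rw [dot_sum_ortho (fun i : T => v i) hdot c c]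
      exact Finset.sum_congr rfl fun i _ => by ring
    rw [hxAx, hxx, Finset.mul_sum]
    refine Finset.sum_le_sum fun i _ => ?_
    have h1 : lam ≤ eig i := hmemT i i.2
    nlinarith [sq_nonneg (c i)]
  -- perturbation bound
  have hfrob : 0 ≤ frobNorm (Dhat - Dbar) := frobNorm_nonneg' _
  have hquadE : ∀ x : Fin n → ℝ,
      -(frobNorm (Dhat - Dbar) * (x ⬝ᵥ x)) ≤ x ⬝ᵥ ((B - A) *ᵥ x) := by
    intro x
    have hBA : B - A = -(centerJ n * (Dhat - Dbar) * centerJ n) := by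
      rw [hBdef, hAdef, Matrix.mul_sub, Matrix.sub_mul]
      abel
    have hform : x ⬝ᵥ ((centerJ n * (Dhat - Dbar) * centerJ n) *ᵥ x)
        = (centerJ n *ᵥ x) ⬝ᵥ ((Dhat - Dbar) *ᵥ (centerJ n *ᵥ x)) := by
      rw [← Matrix.mulVec_mulVec, ← Matrix.mulVec_mulVec]
      rw [dot_sym_mulVec (centerJ_symm n)]
    have habs := quad_abs_le (Dhat - Dbar) (centerJ n *ᵥ x)
    have hproj := proj_le (centerJ_symm n) (centerJ_idem n hn) x
    have hbound : (centerJ n *ᵥ x) ⬝ᵥ ((Dhat - Dbar) *ᵥ (centerJ n *ᵥ x))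
        ≤ frobNorm (Dhat - Dbar) * (x ⬝ᵥ x) := by
      calc (centerJ n *ᵥ x) ⬝ᵥ ((Dhat - Dbar) *ᵥ (centerJ n *ᵥ x))
          ≤ |(centerJ n *ᵥ x) ⬝ᵥ ((Dhat - Dbar) *ᵥ (centerJ n *ᵥ x))| := le_abs_self _
        _ ≤ frobNorm (Dhat - Dbar) * ((centerJ n *ᵥ x) ⬝ᵥ (centerJ n *ᵥ x)) := habs
        _ ≤ frobNorm (Dhat - Dbar) * (x ⬝ᵥ x) := by
            exact mul_le_mul_of_nonneg_left hproj hfrob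
    rw [hBA, Matrix.neg_mulVec, dotProduct_neg, hform]
    linarith
  -- kernel of B is disjoint from V
  set K : Submodule ℝ (Fin n → ℝ) := LinearMap.ker B.mulVecLin with hK
  have hdisj : Disjoint V K := by
    rw [Submodule.disjoint_def]
    intro x hxV hxK
    by_contra hx0
    have hxx : 0 < x ⬝ᵥ x := by
      rcases lt_or_eq_of_le (dot_self_nonneg' x) with h | h
      · exact h
      · exact absurd (dotProduct_self_eq_zero.mp h.symm) hx0
    have hBx : B *ᵥ x = 0 := by
      have := LinearMap.mem_ker.mp hxK
      rwa [Matrix.mulVecLin_apply] at this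
    have h0 : x ⬝ᵥ (B *ᵥ x) = 0 := by rw [hBx, dotProduct_zero]
    have hsplit : x ⬝ᵥ (B *ᵥ x) = x ⬝ᵥ (A *ᵥ x) + x ⬝ᵥ ((B - A) *ᵥ x) := by
      rw [Matrix.sub_mulVec, dotProduct_sub]; ring
    have h1 := hquadA x hxV
    have h2 := hquadE x
    have h3 : 0 < (lam - frobNorm (Dhat - Dbar)) * (x ⬝ᵥ x) :=
      mul_pos (sub_pos.mpr hclose) hxx
    nlinarith
  -- dimension counting
  have hsum := Submodule.finrank_sup_add_finrank_inf_eq V K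
  rw [Disjoint.eq_bot hdisj, finrank_bot] at hsum
  have htop : Module.finrank ℝ ↥(V ⊔ K) ≤ n := by
    refine le_trans (Submodule.finrank_le _) ?_
    simp [Module.finrank_fintype_fun_eq_card]
  have hrank : B.rank + Module.finrank ℝ K = n := by
    rw [Matrix.rank]
    have := LinearMap.finrank_range_add_finrank_ker B.mulVecLin
    rwa [Module.finrank_fintype_fun_eq_card, Fintype.card_fin] at this
  rw [← hr]
  omega
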